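/- Let H be a real Hilbert space, f₁, f₂ ∈ Γ₀(H) with Argmin(f₁+f₂) ≠ ∅, f₂ differentiable with β-Lipschitz gradient (β > 0), and f₁ strongly convex with modulus ϑ > 0. Consider the exact forward–backward iteration x_{n+1} = x_n + λ_n(prox_{γ_n f₁}(x_n − γ_n ∇f₂(x_n)) − x_n), with 0 < γ̲ ≤ γ_n ≤ γ̄ < 2/β and 0 < λ̲ ≤ λ_n ≤ 1 for all n. Then for the unique minimizer x̃ of f₁+f₂, one has ‖x_n − x̃‖ ≤ (1 − λ̲γ̲ϑ/(1 + γ̲ϑ))ⁿ ‖x₀ − x̃‖ for all n, i.e. the iterates converge linearly to x̃. -/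

import Mathlib

open Set Filter Topology

section Aux

variable {H : Type*} [NormedAddCommGroup H] [InnerProductSpace ℝ H]

theorem fb_line_deriv' [CompleteSpace H]
    (f : H → ℝ) (gr : H → H) (hgrad : ∀ x, HasGradientAt f (gr x) x) (x d : H) (t : ℝ) :
    HasDerivAt (fun s : ℝ => f (x + s • d)) (inner ℝ (gr (x + t • d)) d : ℝ) t := by
  have hf := hasGradientAt_iff_hasFDerivAt.1 (hgrad (x + t • d))
  have hline : HasDerivAt (fun s : ℝ => x + s • d) d t := by
    simpa using ((hasDerivAt_id t).smul_const d).const_add x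
  have hf' : HasFDerivAt f ((InnerProductSpace.toDual ℝ H) (gr (x + t • d)))
      ((fun s : ℝ => x + s • d) t) := hf
  have := hf'.comp_hasDerivAt t hline
  exact this

theorem fb_line_deriv [CompleteSpace H]
    (f : H → ℝ) (v x d : H) (h : HasGradientAt f v x) :
    HasDerivAt (fun s : ℝ => f (x + s • d)) (inner ℝ v d : ℝ) 0 := by
  have hf := hasGradientAt_iff_hasFDerivAt.1 h
  have hline : HasDerivAt (fun s : ℝ => x + s • d) d 0 := by
    simpa using ((hasDerivAt_id (0:ℝ)).smul_const d).const_add x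
  have hf' : HasFDerivAt f ((InnerProductSpace.toDual ℝ H) v) ((fun s : ℝ => x + s • d) 0) := by
    simpa using hf
  have := hf'.comp_hasDerivAt (0:ℝ) hline
  exact this

theorem fb_slope_tendsto [CompleteSpace H]
    (f : H → ℝ) (v x d : H) (h : HasGradientAt f v x) :
    Tendsto (fun t : ℝ => (f (x + t • d) - f x) / t) (𝓝[>] 0) (𝓝 (inner ℝ v d : ℝ)) := by
  have := (hasDerivAt_iff_tendsto_slope.1 (fb_line_deriv f v x d h)).mono_left
    (nhdsWithin_mono _ (fun t ht => ne_of_gt ht))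
  refine this.congr (fun t => ?_)
  simp [slope_def_field, div_eq_inv_mul]

/-- convex gradient inequality -/
theorem fb_convex_grad_ineq [CompleteSpace H]
    (f : H → ℝ) (hf : ConvexOn ℝ univ f) (v x : H) (h : HasGradientAt f v x) (y : H) :
    f x + (inner ℝ v (y - x) : ℝ) ≤ f y := by
  have key : ∀ t : ℝ, t ∈ Ioc (0:ℝ) 1 → (f (x + t • (y - x)) - f x) / t ≤ f y - f x := by
    intro t ht
    have hcc := hf.2 (mem_univ x) (mem_univ y) (by linarith [ht.1, ht.2] : (0:ℝ) ≤ 1 - t)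
      (le_of_lt ht.1) (by ring)
    have hxe : (1 - t) • x + t • y = x + t • (y - x) := by
      rw [smul_sub, sub_smul]; module
    rw [hxe] at hcc
    rw [div_le_iff₀ ht.1]
    simp only [smul_eq_mul] at hcc
    nlinarith [ht.1]
  have hev : ∀ᶠ t in 𝓝[>] (0:ℝ), (f (x + t • (y - x)) - f x) / t ≤ f y - f x := by
    filter_upwards [Ioc_mem_nhdsGT_of_mem (by norm_num : (0:ℝ) ∈ Ico (0:ℝ) 1)] with t ht
    exact key t ht
  have := le_of_tendsto (fb_slope_tendsto f v x (y - x) h) hev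
  linarith

theorem fb_normsq_convex : ConvexOn ℝ univ (fun y : H => ‖y‖^2) := by
  refine ⟨convex_univ, fun x _ y _ a b ha hb hab => ?_⟩
  have h1 : ‖a • x + b • y‖ ≤ a * ‖x‖ + b * ‖y‖ := by
    calc ‖a • x + b • y‖ ≤ ‖a • x‖ + ‖b • y‖ := norm_add_le _ _
    _ = a * ‖x‖ + b * ‖y‖ := by
        rw [norm_smul, norm_smul, Real.norm_of_nonneg ha, Real.norm_of_nonneg hb]
  have h2 : (0:ℝ) ≤ ‖a • x + b • y‖ := norm_nonneg _
  simp only [smul_eq_mul]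
  have h3 := pow_le_pow_left₀ h2 h1 2
  nlinarith [mul_nonneg ha hb, sq_nonneg (‖x‖ - ‖y‖), norm_nonneg x, norm_nonneg y]

theorem fb_comb_norm_id (p y : H) (t : ℝ) :
    (1-t) * ‖p‖^2 + t * ‖y‖^2 - ‖(1-t) • p + t • y‖^2 = t * (1-t) * ‖y - p‖^2 := by
  have e1 : ‖(1-t) • p + t • y‖^2
      = (1-t)^2*‖p‖^2 + 2*((1-t)*t)*(inner ℝ p y : ℝ) + t^2*‖y‖^2 := by
    rw [norm_add_sq_real, norm_smul, norm_smul, inner_smul_left, inner_smul_right]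
    simp [Real.norm_eq_abs, mul_pow, sq_abs]
    try ring
  have e2 : ‖y - p‖^2 = ‖y‖^2 - 2*(inner ℝ p y : ℝ) + ‖p‖^2 := by
    rw [norm_sub_sq_real, real_inner_comm]
    try ring
  rw [e1, e2]; ring

/-- quadratic growth at a minimizer of a strongly convex function -/
theorem fb_quad_growth
    (φ : H → ℝ) (μ : ℝ) (hconv : ConvexOn ℝ univ (fun y => φ y - μ/2 * ‖y‖^2))
    (p : H) (hp : IsMinOn φ univ p) (y : H) :
    φ p + μ/2 * ‖y - p‖^2 ≤ φ y := by
  have key : ∀ t : ℝ, t ∈ Ioc (0:ℝ) 1 → μ/2 * (1-t) * ‖y - p‖^2 ≤ φ y - φ p := by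
    intro t ht
    have hcc := hconv.2 (mem_univ p) (mem_univ y) (by linarith [ht.1, ht.2] : (0:ℝ) ≤ 1 - t)
      (le_of_lt ht.1) (by ring)
    have hmin : φ p ≤ φ ((1-t) • p + t • y) := hp (mem_univ ((1-t) • p + t • y))
    simp only [smul_eq_mul] at hcc
    have hid := fb_comb_norm_id p y t
    have ht0 := ht.1
    have hid2 : μ * ((1-t) * ‖p‖^2 + t * ‖y‖^2 - ‖(1-t) • p + t • y‖^2)
        = μ * (t * (1-t) * ‖y - p‖^2) := by rw [hid]
    have h5 : t * (μ/2 * (1-t) * ‖y - p‖^2) ≤ t * (φ y - φ p) := by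
      nlinarith [hcc, hmin, hid2]
    exact le_of_mul_le_mul_left h5 ht0
  have hev : ∀ᶠ t in 𝓝[>] (0:ℝ), μ/2 * (1-t) * ‖y - p‖^2 ≤ φ y - φ p := by
    filter_upwards [Ioc_mem_nhdsGT_of_mem (by norm_num : (0:ℝ) ∈ Ico (0:ℝ) 1)] with t ht
    exact key t ht
  have htend : Tendsto (fun t : ℝ => μ/2 * (1-t) * ‖y - p‖^2) (𝓝[>] (0:ℝ))
      (𝓝 (μ/2 * ‖y - p‖^2)) := by
    have : ContinuousAt (fun t : ℝ => μ/2 * (1-t) * ‖y - p‖^2) 0 := by fun_prop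
    have := this.continuousWithinAt (s := Ioi (0:ℝ))
    simpa using this.tendsto
  linarith [le_of_tendsto htend hev]

theorem fb_affine_convex (z : H) (c : ℝ) :
    ConvexOn ℝ univ (fun y : H => -(inner ℝ z y : ℝ) + c) := by
  refine ⟨convex_univ, fun a _ b _ s t hs ht hst => le_of_eq ?_⟩
  simp only [inner_add_right, real_inner_smul_right, smul_eq_mul]
  linear_combination (-c) * hst

theorem fb_prox_contract
    (f₁ : H → ℝ) (ϑ γ : ℝ) (hϑ : 0 < ϑ) (hγ : 0 < γ)
    (hstrong : ConvexOn ℝ univ (fun y => f₁ y - ϑ/2 * ‖y‖^2))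
    (z z' pz qz : H)
    (hp : IsMinOn (fun y => (1/2) * ‖y - z‖^2 + γ * f₁ y) univ pz)
    (hq : IsMinOn (fun y => (1/2) * ‖y - z'‖^2 + γ * f₁ y) univ qz) :
    (1 + γ * ϑ) * ‖pz - qz‖ ≤ ‖z - z'‖ := by
  obtain ⟨μ, hμ⟩ : ∃ μ : ℝ, μ = 1 + γ * ϑ := ⟨_, rfl⟩
  rw [← hμ]
  have hconv : ∀ w : H, ConvexOn ℝ univ
      (fun y => ((1/2) * ‖y - w‖^2 + γ * f₁ y) - μ/2 * ‖y‖^2) := by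
    intro w
    have h1 : (fun y : H => ((1/2) * ‖y - w‖^2 + γ * f₁ y) - μ/2 * ‖y‖^2)
        = (fun y : H => γ • (f₁ y - ϑ/2 * ‖y‖^2) + (-(inner ℝ w y : ℝ) + (1/2) * ‖w‖^2)) := by
      funext y
      have : ‖y - w‖^2 = ‖y‖^2 - 2 * (inner ℝ y w : ℝ) + ‖w‖^2 := norm_sub_sq_real y w
      simp only [smul_eq_mul, hμ]
      rw [this, real_inner_comm y w]; ring
    rw [h1]
    exact (hstrong.smul (le_of_lt hγ)).add (fb_affine_convex w _)
  have hA := fb_quad_growth _ μ (hconv z) pz hp qz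
  have hB := fb_quad_growth _ μ (hconv z') qz hq pz
  have e : ‖qz - z‖^2 - ‖pz - z‖^2 + ‖pz - z'‖^2 - ‖qz - z'‖^2
      = 2 * (inner ℝ (pz - qz) (z - z') : ℝ) := by
    simp only [norm_sub_sq_real, inner_sub_left, inner_sub_right]
    ring
  have hrev : ‖qz - pz‖ = ‖pz - qz‖ := norm_sub_rev _ _
  have key : μ * ‖pz - qz‖^2 ≤ (inner ℝ (pz - qz) (z - z') : ℝ) := by
    have hrev2 : ‖qz - pz‖^2 = ‖pz - qz‖^2 := by rw [hrev]
    have hrev3 : μ/2 * ‖qz - pz‖^2 = μ/2 * ‖pz - qz‖^2 := by rw [hrev2]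
    linarith [hA, hB, e, hrev3]
  have hcs := real_inner_le_norm (pz - qz) (z - z')
  rcases eq_or_lt_of_le (norm_nonneg (pz - qz)) with h0 | h0
  · rw [← h0]; simp [norm_nonneg]
  · have := le_trans key hcs
    have hμpos : 0 < μ := by rw [hμ]; positivity
    nlinarith [this, h0]

/-- descent lemma -/
theorem fb_descent_lemma [CompleteSpace H]
    (f : H → ℝ) (gr : H → H) (hgrad : ∀ x, HasGradientAt f (gr x) x)
    (β : NNReal) (hlip : LipschitzWith β gr) (x d : H) :
    f (x + d) ≤ f x + (inner ℝ (gr x) d : ℝ) + (β:ℝ)/2 * ‖d‖^2 := by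
  set φ : ℝ → ℝ := fun t => f (x + t • d) - t * (inner ℝ (gr x) d : ℝ) - (β:ℝ)/2 * t^2 * ‖d‖^2
    with hφ
  have hder : ∀ t : ℝ, HasDerivAt φ
      ((inner ℝ (gr (x + t • d)) d : ℝ) - (inner ℝ (gr x) d : ℝ) - (β:ℝ) * t * ‖d‖^2) t := by
    intro t
    have h1 := fb_line_deriv' f gr hgrad x d t
    have h2 : HasDerivAt (fun t : ℝ => t * (inner ℝ (gr x) d : ℝ)) (inner ℝ (gr x) d : ℝ) t := by
      simpa using (hasDerivAt_id t).mul_const (inner ℝ (gr x) d : ℝ)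
    have h3 : HasDerivAt (fun t : ℝ => (β:ℝ)/2 * t^2 * ‖d‖^2) ((β:ℝ) * t * ‖d‖^2) t := by
      have := ((hasDerivAt_pow 2 t).const_mul ((β:ℝ)/2)).mul_const (‖d‖^2)
      convert this using 1
      · rfl
      · rfl
      · ring
    exact (h1.sub h2).sub h3
  have hmono : AntitoneOn φ (Icc 0 1) := by
    apply antitoneOn_of_deriv_nonpos (convex_Icc 0 1)
    · exact Continuous.continuousOn (by
        have : Differentiable ℝ φ := fun t => (hder t).differentiableAt
        exact this.continuous)
    · intro t ht
      exact (hder t).differentiableAt.differentiableWithinAt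
    · intro t ht
      rw [interior_Icc] at ht
      rw [(hder t).deriv]
      have hl : ‖gr (x + t • d) - gr x‖ ≤ (β:ℝ) * (t * ‖d‖) := by
        have := hlip.dist_le_mul (x + t • d) x
        simp only [dist_eq_norm] at this
        calc ‖gr (x + t • d) - gr x‖ ≤ (β:ℝ) * ‖x + t • d - x‖ := this
        _ = (β:ℝ) * (t * ‖d‖) := by
            rw [add_sub_cancel_left, norm_smul, Real.norm_of_nonneg (le_of_lt ht.1)]
      have hcs : (inner ℝ (gr (x + t • d)) d : ℝ) - (inner ℝ (gr x) d : ℝ)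
          ≤ ‖gr (x + t • d) - gr x‖ * ‖d‖ := by
        rw [← inner_sub_left]
        exact real_inner_le_norm _ _
      have : (inner ℝ (gr (x + t • d)) d : ℝ) - (inner ℝ (gr x) d : ℝ) ≤ (β:ℝ) * t * ‖d‖^2 := by
        calc _ ≤ ‖gr (x + t • d) - gr x‖ * ‖d‖ := hcs
        _ ≤ ((β:ℝ) * (t * ‖d‖)) * ‖d‖ := mul_le_mul_of_nonneg_right hl (norm_nonneg _)
        _ = (β:ℝ) * t * ‖d‖^2 := by ring
      linarith
  have := hmono (by norm_num : (0:ℝ) ∈ Icc (0:ℝ) 1) (by norm_num : (1:ℝ) ∈ Icc (0:ℝ) 1)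
    (by norm_num)
  simp only [hφ, zero_smul, add_zero, one_smul, one_pow, mul_zero, zero_mul, sub_zero,
    mul_one, one_mul] at this
  linarith [this]

theorem fb_cocoercive [CompleteSpace H]
    (f : H → ℝ) (hf : ConvexOn ℝ univ f) (gr : H → H) (hgrad : ∀ x, HasGradientAt f (gr x) x)
    (β : NNReal) (hβ : 0 < (β:ℝ)) (hlip : LipschitzWith β gr) (x y : H) :
    (β:ℝ)⁻¹ * ‖gr x - gr y‖^2 ≤ (inner ℝ (gr x - gr y) (x - y) : ℝ) := by
  have K : ∀ a b : H, f a + (inner ℝ (gr a) (b - a) : ℝ) + 1/(2*(β:ℝ)) * ‖gr b - gr a‖^2 ≤ f b := by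
    intro a b
    set w := gr b - gr a with hw
    have h1 := fb_convex_grad_ineq f hf (gr a) a (hgrad a) (b + (-(β:ℝ)⁻¹) • w)
    have h2 := fb_descent_lemma f gr hgrad β hlip b ((-(β:ℝ)⁻¹) • w)
    have e1 : (inner ℝ (gr a) (b + (-(β:ℝ)⁻¹) • w - a) : ℝ)
        = (inner ℝ (gr a) (b - a) : ℝ) - (β:ℝ)⁻¹ * (inner ℝ (gr a) w : ℝ) := by
      rw [add_sub_right_comm, inner_add_right, real_inner_smul_right]; ring
    have e2 : (inner ℝ (gr b) ((-(β:ℝ)⁻¹) • w) : ℝ) = -(β:ℝ)⁻¹ * (inner ℝ (gr b) w : ℝ) := by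
      rw [real_inner_smul_right]
    have e3 : ‖(-(β:ℝ)⁻¹) • w‖^2 = (β:ℝ)⁻¹^2 * ‖w‖^2 := by
      rw [norm_smul]; simp [mul_pow]
    have e4 : (inner ℝ (gr b) w : ℝ) - (inner ℝ (gr a) w : ℝ) = ‖w‖^2 := by
      rw [← inner_sub_left, hw, real_inner_self_eq_norm_sq]
    rw [e1] at h1
    rw [e2, e3] at h2
    have hβ' : (β:ℝ) ≠ 0 := ne_of_gt hβ
    have : f a + ((inner ℝ (gr a) (b-a) : ℝ) - (β:ℝ)⁻¹ * (inner ℝ (gr a) w : ℝ))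
        ≤ f b + -(β:ℝ)⁻¹ * (inner ℝ (gr b) w : ℝ) + (β:ℝ)/2 * ((β:ℝ)⁻¹^2 * ‖w‖^2) :=
      le_trans h1 h2
    have e5 : (β:ℝ)/2 * ((β:ℝ)⁻¹^2 * ‖w‖^2) = 1/(2*(β:ℝ)) * ‖w‖^2 := by
      field_simp
    have e6 : (β:ℝ)⁻¹ * (inner ℝ (gr b) w : ℝ) - (β:ℝ)⁻¹ * (inner ℝ (gr a) w : ℝ)
        = (β:ℝ)⁻¹ * ‖w‖^2 := by rw [← mul_sub, e4]
    have e7 : (β:ℝ)⁻¹ * ‖w‖^2 - 1/(2*(β:ℝ)) * ‖w‖^2 = 1/(2*(β:ℝ)) * ‖w‖^2 := by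
      field_simp; ring
    linarith
  have k1 := K x y
  have k2 := K y x
  have e8 : ‖gr x - gr y‖ = ‖gr y - gr x‖ := norm_sub_rev _ _
  have e9 : (inner ℝ (gr x - gr y) (x - y) : ℝ)
      = -(inner ℝ (gr x) (y - x) : ℝ) - (inner ℝ (gr y) (x - y) : ℝ) := by
    simp only [inner_sub_left, inner_sub_right]
    ring
  have e10 : 1/(2*(β:ℝ)) * ‖gr y - gr x‖^2 = 1/(2*(β:ℝ)) * ‖gr x - gr y‖^2 := by rw [e8]
  rw [e9]
  have hβ' : (β:ℝ) ≠ 0 := ne_of_gt hβ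
  have e11 : (β:ℝ)⁻¹ * ‖gr x - gr y‖^2
      = 1/(2*(β:ℝ)) * ‖gr x - gr y‖^2 + 1/(2*(β:ℝ)) * ‖gr x - gr y‖^2 := by
    field_simp; ring
  linarith

theorem fb_forward_nonexp [CompleteSpace H]
    (f : H → ℝ) (hf : ConvexOn ℝ univ f) (gr : H → H) (hgrad : ∀ x, HasGradientAt f (gr x) x)
    (β : NNReal) (hβ : 0 < (β:ℝ)) (hlip : LipschitzWith β gr)
    (γ : ℝ) (hγ0 : 0 ≤ γ) (hγ2 : γ ≤ 2 / (β:ℝ)) (x y : H) :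
    ‖(x - γ • gr x) - (y - γ • gr y)‖ ≤ ‖x - y‖ := by
  have hco := fb_cocoercive f hf gr hgrad β hβ hlip x y
  have e1 : (x - γ • gr x) - (y - γ • gr y) = (x - y) - γ • (gr x - gr y) := by
    rw [smul_sub]; abel
  rw [e1]
  have hsq : ‖(x - y) - γ • (gr x - gr y)‖^2 ≤ ‖x - y‖^2 := by
    rw [norm_sub_sq_real]
    have e2 : (inner ℝ (x-y) (γ • (gr x - gr y)) : ℝ) = γ * (inner ℝ (gr x - gr y) (x-y) : ℝ) := by
      rw [real_inner_smul_right, real_inner_comm]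
    have e3 : ‖γ • (gr x - gr y)‖^2 = γ^2 * ‖gr x - gr y‖^2 := by
      rw [norm_smul, Real.norm_of_nonneg hγ0]; ring
    rw [e2, e3]
    have h4 : γ^2 * ‖gr x - gr y‖^2 ≤ γ * ((β:ℝ)⁻¹ * ‖gr x - gr y‖^2) * 2 := by
      have : γ * γ ≤ γ * (2 * (β:ℝ)⁻¹) := by
        apply mul_le_mul_of_nonneg_left _ hγ0
        rw [div_eq_mul_inv] at hγ2; linarith
      nlinarith [sq_nonneg ‖gr x - gr y‖]
    have h5 : γ * ((β:ℝ)⁻¹ * ‖gr x - gr y‖^2) ≤ γ * (inner ℝ (gr x - gr y) (x-y) : ℝ) :=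
      mul_le_mul_of_nonneg_left hco hγ0
    nlinarith
  calc ‖(x - y) - γ • (gr x - gr y)‖ = Real.sqrt (‖(x - y) - γ • (gr x - gr y)‖^2) := by
        rw [Real.sqrt_sq (norm_nonneg _)]
  _ ≤ Real.sqrt (‖x - y‖^2) := Real.sqrt_le_sqrt hsq
  _ = ‖x - y‖ := Real.sqrt_sq (norm_nonneg _)

/-- the minimizer of `f₁ + f₂` is a fixed point of the forward-backward map -/
theorem fb_fixed_point [CompleteSpace H]
    (f₁ f₂ : H → ℝ) (hf₁_conv : ConvexOn ℝ univ f₁)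
    (gr : H → H) (hgrad : ∀ x, HasGradientAt f₂ (gr x) x)
    (xt : H) (hxt : IsMinOn (fun y => f₁ y + f₂ y) univ xt)
    (γ : ℝ) (hγ : 0 < γ) :
    IsMinOn (fun y => (1/2) * ‖y - (xt - γ • gr xt)‖^2 + γ * f₁ y) univ xt := by
  -- Fermat's rule: f₁ xt ≤ f₁ y + ⟪gr xt, y - xt⟫
  have fermat : ∀ y, f₁ xt ≤ f₁ y + (inner ℝ (gr xt) (y - xt) : ℝ) := by
    intro y
    have key : ∀ t : ℝ, t ∈ Ioc (0:ℝ) 1 →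
        -((f₂ (xt + t • (y - xt)) - f₂ xt) / t) ≤ f₁ y - f₁ xt := by
      intro t ht
      have hxe : (1 - t) • xt + t • y = xt + t • (y - xt) := by
        rw [smul_sub, sub_smul]; module
      have hcc := hf₁_conv.2 (mem_univ xt) (mem_univ y)
        (by linarith [ht.1, ht.2] : (0:ℝ) ≤ 1 - t) (le_of_lt ht.1) (by ring)
      rw [hxe] at hcc
      have hmin : f₁ xt + f₂ xt ≤ f₁ (xt + t • (y - xt)) + f₂ (xt + t • (y - xt)) :=
        hxt (mem_univ (xt + t • (y - xt)))
      simp only [smul_eq_mul] at hcc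
      rw [neg_le, le_div_iff₀ ht.1]
      nlinarith [ht.1]
    have hev : ∀ᶠ t in 𝓝[>] (0:ℝ),
        -((f₂ (xt + t • (y - xt)) - f₂ xt) / t) ≤ f₁ y - f₁ xt := by
      filter_upwards [Ioc_mem_nhdsGT_of_mem (by norm_num : (0:ℝ) ∈ Ico (0:ℝ) 1)] with t ht
      exact key t ht
    have htend := (fb_slope_tendsto f₂ (gr xt) xt (y - xt) (hgrad xt)).neg
    have := le_of_tendsto htend hev
    linarith
  intro y _
  simp only [Set.mem_setOf_eq]
  have e1 : ‖y - (xt - γ • gr xt)‖^2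
      = ‖y - xt‖^2 + 2 * γ * (inner ℝ (gr xt) (y - xt) : ℝ) + γ^2 * ‖gr xt‖^2 := by
    have : y - (xt - γ • gr xt) = (y - xt) + γ • gr xt := by abel
    rw [this, norm_add_sq_real, real_inner_smul_right, norm_smul,
      Real.norm_of_nonneg (le_of_lt hγ), real_inner_comm]
    ring
  have e2 : ‖xt - (xt - γ • gr xt)‖^2 = γ^2 * ‖gr xt‖^2 := by
    have : xt - (xt - γ • gr xt) = γ • gr xt := by abel
    rw [this, norm_smul, Real.norm_of_nonneg (le_of_lt hγ)]; ring
  rw [e1, e2]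
  have hfy := fermat y
  nlinarith [sq_nonneg ‖y - xt‖, mul_le_mul_of_nonneg_left hfy (le_of_lt hγ)]

end Aux

/-- Linear convergence of the exact forward–backward algorithm when `f₁` is
strongly convex with modulus `ϑ`. -/
theorem stmt_9 {H : Type*} [NormedAddCommGroup H] [InnerProductSpace ℝ H]
    [CompleteSpace H]
    (f₁ f₂ : H → ℝ)
    (hf₁_lsc : LowerSemicontinuous f₁)
    (ϑ : ℝ) (hϑ : 0 < ϑ)
    (hf₁_strong : ConvexOn ℝ univ (fun y => f₁ y - ϑ/2 * ‖y‖^2))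
    (hf₂_conv : ConvexOn ℝ univ f₂)
    (gr : H → H) (hgrad : ∀ x, HasGradientAt f₂ (gr x) x)
    (β : NNReal) (hβ : 0 < (β:ℝ)) (hlip : LipschitzWith β gr)
    (xt : H) (hxt : IsMinOn (fun y => f₁ y + f₂ y) univ xt)
    (γ lam : ℕ → ℝ) (γlb γub llb : ℝ)
    (hγlb : 0 < γlb) (hγ : ∀ n, γlb ≤ γ n ∧ γ n ≤ γub) (hγub : γub < 2 / β)
    (hllb : 0 < llb) (hlam : ∀ n, llb ≤ lam n ∧ lam n ≤ 1)
    (x p : ℕ → H)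
    (hprox : ∀ n, IsMinOn
      (fun y => (1/2) * ‖y - (x n - γ n • gr (x n))‖^2 + γ n * f₁ y) univ (p n))
    (hiter : ∀ n, x (n+1) = x n + lam n • (p n - x n)) :
    ∀ n, ‖x n - xt‖ ≤ (1 - llb * γlb * ϑ / (1 + γlb * ϑ))^n * ‖x 0 - xt‖ := by
  have hf₁_conv : ConvexOn ℝ univ f₁ := by
    have h1 : (fun y : H => f₁ y) = (fun y => (f₁ y - ϑ/2 * ‖y‖^2) + (ϑ/2) • ‖y‖^2) := by
      funext y; simp only [smul_eq_mul]; ring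
    rw [show f₁ = fun y => f₁ y from rfl, h1]
    exact hf₁_strong.add (fb_normsq_convex.smul (by positivity))
  have hB : (0:ℝ) < 1 + γlb * ϑ := by positivity
  set r : ℝ := 1 - llb * γlb * ϑ / (1 + γlb * ϑ) with hr
  have hllb1 : llb ≤ 1 := le_trans (hlam 0).1 (hlam 0).2
  have hr0 : 0 ≤ r := by
    rw [hr]
    have h1 : llb * γlb * ϑ / (1 + γlb * ϑ) ≤ 1 := by
      rw [div_le_one hB]
      nlinarith [mul_pos hγlb hϑ]
    linarith
  have hstep : ∀ n, ‖x (n+1) - xt‖ ≤ r * ‖x n - xt‖ := by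
    intro n
    have hγn : 0 < γ n := lt_of_lt_of_le hγlb (hγ n).1
    have hγn2 : γ n ≤ 2 / (β:ℝ) := le_of_lt (lt_of_le_of_lt (hγ n).2 hγub)
    have hln0 : 0 < lam n := lt_of_lt_of_le hllb (hlam n).1
    have hln1 : lam n ≤ 1 := (hlam n).2
    have hA : (0:ℝ) < 1 + γ n * ϑ := by positivity
    -- xt is a fixed point
    have hq := fb_fixed_point f₁ f₂ hf₁_conv gr hgrad xt hxt (γ n) hγn
    -- prox contraction
    have hcontract := fb_prox_contract f₁ ϑ (γ n) hϑ hγn hf₁_strong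
      (x n - γ n • gr (x n)) (xt - γ n • gr xt) (p n) xt (hprox n) hq
    -- forward step is nonexpansive
    have hne := fb_forward_nonexp f₂ hf₂_conv gr hgrad β hβ hlip (γ n)
      (le_of_lt hγn) hγn2 (x n) xt
    have h1 : (1 + γ n * ϑ) * ‖p n - xt‖ ≤ ‖x n - xt‖ := le_trans hcontract hne
    have h2 : ‖p n - xt‖ ≤ (1/(1 + γ n * ϑ)) * ‖x n - xt‖ := by
      rw [div_mul_eq_mul_div, le_div_iff₀ hA]
      linarith [h1]
    -- triangle inequality for the convex combination
    have hx1 : x (n+1) - xt = (1 - lam n) • (x n - xt) + lam n • (p n - xt) := by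
      rw [hiter n]
      module
    have htri : ‖x (n+1) - xt‖ ≤ (1 - lam n) * ‖x n - xt‖ + lam n * ‖p n - xt‖ := by
      rw [hx1]
      calc ‖(1 - lam n) • (x n - xt) + lam n • (p n - xt)‖
          ≤ ‖(1 - lam n) • (x n - xt)‖ + ‖lam n • (p n - xt)‖ := norm_add_le _ _
      _ = (1 - lam n) * ‖x n - xt‖ + lam n * ‖p n - xt‖ := by
          rw [norm_smul, norm_smul, Real.norm_of_nonneg (by linarith),
            Real.norm_of_nonneg (le_of_lt hln0)]
    have hcoef : (1 - lam n) + lam n * (1/(1 + γ n * ϑ)) ≤ r := by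
      have key : llb * γlb * ϑ * (1 + γ n * ϑ) ≤ lam n * γ n * ϑ * (1 + γlb * ϑ) := by
        have hg : γlb ≤ γ n := (hγ n).1
        have hl : llb ≤ lam n := (hlam n).1
        have m1 : llb * γlb ≤ lam n * γ n :=
          mul_le_mul hl hg (le_of_lt hγlb) (le_of_lt hln0)
        have m2 : llb * (γlb * γ n) ≤ lam n * (γlb * γ n) :=
          mul_le_mul_of_nonneg_right hl (by positivity)
        have h3 : llb * γlb * ϑ ≤ lam n * γ n * ϑ :=
          mul_le_mul_of_nonneg_right m1 (le_of_lt hϑ)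
        have h4 : llb * (γlb * γ n) * (ϑ * ϑ) ≤ lam n * (γlb * γ n) * (ϑ * ϑ) :=
          mul_le_mul_of_nonneg_right m2 (by positivity)
        nlinarith [h3, h4]
      have hdiv : llb * γlb * ϑ / (1 + γlb * ϑ) ≤ lam n * γ n * ϑ / (1 + γ n * ϑ) :=
        (div_le_div_iff₀ hB hA).2 key
      have e : (1 - lam n) + lam n * (1/(1 + γ n * ϑ))
          = 1 - lam n * γ n * ϑ / (1 + γ n * ϑ) := by
        field_simp
        ring
      rw [e, hr]
      linarith
    calc ‖x (n+1) - xt‖ ≤ (1 - lam n) * ‖x n - xt‖ + lam n * ‖p n - xt‖ := htri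
    _ ≤ (1 - lam n) * ‖x n - xt‖ + lam n * ((1/(1 + γ n * ϑ)) * ‖x n - xt‖) := by
        have := mul_le_mul_of_nonneg_left h2 (le_of_lt hln0)
        linarith
    _ = ((1 - lam n) + lam n * (1/(1 + γ n * ϑ))) * ‖x n - xt‖ := by ring
    _ ≤ r * ‖x n - xt‖ := mul_le_mul_of_nonneg_right hcoef (norm_nonneg _)
  intro n
  induction n with
  | zero => simp
  | succ n ih =>
    calc ‖x (n+1) - xt‖ ≤ r * ‖x n - xt‖ := hstep n
    _ ≤ r * (r^n * ‖x 0 - xt‖) := mul_le_mul_of_nonneg_left ih hr0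
    _ = r^(n+1) * ‖x 0 - xt‖ := by ring
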